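/- For every ℓ ≥ 1 there exist maps F, G : (Fin ℓ → ℝ) → (Fin (3ℓ) → ℝ) such that for all binary vectors a, b : Fin ℓ → ℝ: (i) F a and G b are binary vectors; (ii) ∑_t (F a) t = ℓ and ∑_t (G b) t = ℓ (each padded vector has exactly ℓ ones); (iii) ⟨F a, G b⟩ = ⟨a, b⟩; and consequently (iv) ⟨F a, G b⟩ / (‖F a‖ · ‖G b‖) = ⟨a, b⟩ / ℓ. -/
import Mathlib


open Finset

/-- The Euclidean norm of a vector indexed by a finite type. -/
noncomputable def euclNorm {ι : Type*} [Fintype ι] (v : ι → ℝ) : ℝ :=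
  Real.sqrt (∑ t, (v t) ^ 2)

noncomputable def padF (ℓ : ℕ) (a : Fin ℓ → ℝ) (n : ℕ) : ℝ :=
  if h : n < ℓ then a ⟨n, h⟩
  else if h2 : n < 2 * ℓ then 1 - a ⟨n - ℓ, by omega⟩
  else 0

noncomputable def padG (ℓ : ℕ) (b : Fin ℓ → ℝ) (n : ℕ) : ℝ :=
  if h : n < ℓ then b ⟨n, h⟩
  else if h2 : n < 2 * ℓ then 0
  else if h3 : n < 3 * ℓ then 1 - b ⟨n - 2 * ℓ, by omega⟩
  else 0

lemma sum3 (n : ℕ) (f : ℕ → ℝ) :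
    ∑ i ∈ Finset.range (3 * n), f i =
      ∑ i ∈ Finset.range n, f i + ∑ i ∈ Finset.range n, f (n + i)
        + ∑ i ∈ Finset.range n, f (2 * n + i) := by
  have h : 3 * n = n + (n + n) := by ring
  rw [h, Finset.sum_range_add, Finset.sum_range_add, ← add_assoc]
  congr 1
  apply Finset.sum_congr rfl
  intro i _
  congr 1
  ring

/-- Correctness of the padding construction proving that bichromatic additive-gap
Most Similar Documents and bichromatic additive-gap Maximum Inner Product are
subquadratic equivalent. -/
theorem stmt3 (ℓ : ℕ) (hℓ : 1 ≤ ℓ) :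
    ∃ F G : (Fin ℓ → ℝ) → (Fin (3 * ℓ) → ℝ),
      ∀ a b : Fin ℓ → ℝ,
        (∀ t, a t = 0 ∨ a t = 1) → (∀ t, b t = 0 ∨ b t = 1) →
        (∀ t, F a t = 0 ∨ F a t = 1) ∧
        (∀ t, G b t = 0 ∨ G b t = 1) ∧
        (∑ t, F a t) = (ℓ : ℝ) ∧
        (∑ t, G b t) = (ℓ : ℝ) ∧
        (∑ t, F a t * G b t) = (∑ t, a t * b t) ∧
        (∑ t, F a t * G b t) / (euclNorm (F a) * euclNorm (G b)) =
          (∑ t, a t * b t) / (ℓ : ℝ) := by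
  refine ⟨fun a t => padF ℓ a t.val, fun b t => padG ℓ b t.val, ?_⟩
  intro a b ha hb
  -- pointwise values on the three blocks
  have hF1 : ∀ t : Fin ℓ, padF ℓ a t.val = a t := by
    intro t; simp [padF, t.isLt]
  have hF2 : ∀ t : Fin ℓ, padF ℓ a (ℓ + t.val) = 1 - a t := by
    intro t
    have h1 : ¬ ℓ + (t : ℕ) < ℓ := by omega
    have h2 : ℓ + (t : ℕ) < 2 * ℓ := by have := t.isLt; omega
    simp [padF, h1, h2, Nat.add_sub_cancel_left]
  have hF3 : ∀ i : ℕ, padF ℓ a (2 * ℓ + i) = 0 := by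
    intro i
    have h1 : ¬ 2 * ℓ + i < ℓ := by omega
    have h2 : ¬ 2 * ℓ + i < 2 * ℓ := by omega
    simp [padF, h1, h2]
  have hG1 : ∀ t : Fin ℓ, padG ℓ b t.val = b t := by
    intro t; simp [padG, t.isLt]
  have hG2 : ∀ t : Fin ℓ, padG ℓ b (ℓ + t.val) = 0 := by
    intro t
    have h1 : ¬ ℓ + (t : ℕ) < ℓ := by omega
    have h2 : ℓ + (t : ℕ) < 2 * ℓ := by have := t.isLt; omega
    simp [padG, h1, h2]
  have hG3 : ∀ t : Fin ℓ, padG ℓ b (2 * ℓ + t.val) = 1 - b t := by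
    intro t
    have h1 : ¬ 2 * ℓ + (t : ℕ) < ℓ := by omega
    have h2 : ¬ 2 * ℓ + (t : ℕ) < 2 * ℓ := by omega
    have h3 : 2 * ℓ + (t : ℕ) < 3 * ℓ := by have := t.isLt; omega
    simp [padG, h1, h2, h3, Nat.add_sub_cancel_left]
  have hFbin : ∀ t : Fin (3 * ℓ), padF ℓ a t.val = 0 ∨ padF ℓ a t.val = 1 := by
    intro t
    unfold padF
    split
    · exact ha _
    · split
      · rename_i h1 h2
        rcases ha ⟨(t : ℕ) - ℓ, by omega⟩ with h | h <;> simp [h]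
      · left; rfl
  have hGbin : ∀ t : Fin (3 * ℓ), padG ℓ b t.val = 0 ∨ padG ℓ b t.val = 1 := by
    intro t
    unfold padG
    split
    · exact hb _
    · split
      · left; rfl
      · split
        · rename_i h1 h2 h3
          rcases hb ⟨(t : ℕ) - 2 * ℓ, by omega⟩ with h | h <;> simp [h]
        · left; rfl
  -- block sums as Fin ℓ sums
  have B1F : ∑ i ∈ Finset.range ℓ, padF ℓ a i = ∑ t : Fin ℓ, a t := by
    rw [← Fin.sum_univ_eq_sum_range (fun i => padF ℓ a i) ℓ]
    exact Finset.sum_congr rfl fun t _ => hF1 t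
  have B2F : ∑ i ∈ Finset.range ℓ, padF ℓ a (ℓ + i) = (ℓ : ℝ) - ∑ t : Fin ℓ, a t := by
    rw [← Fin.sum_univ_eq_sum_range (fun i => padF ℓ a (ℓ + i)) ℓ,
      Finset.sum_congr rfl fun t _ => hF2 t, Finset.sum_sub_distrib]
    simp
  have B3F : ∑ i ∈ Finset.range ℓ, padF ℓ a (2 * ℓ + i) = 0 :=
    Finset.sum_eq_zero fun i _ => hF3 i
  have B1G : ∑ i ∈ Finset.range ℓ, padG ℓ b i = ∑ t : Fin ℓ, b t := by
    rw [← Fin.sum_univ_eq_sum_range (fun i => padG ℓ b i) ℓ]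
    exact Finset.sum_congr rfl fun t _ => hG1 t
  have B2G : ∑ i ∈ Finset.range ℓ, padG ℓ b (ℓ + i) = 0 := by
    rw [← Fin.sum_univ_eq_sum_range (fun i => padG ℓ b (ℓ + i)) ℓ]
    exact Finset.sum_eq_zero fun t _ => hG2 t
  have B3G : ∑ i ∈ Finset.range ℓ, padG ℓ b (2 * ℓ + i) = (ℓ : ℝ) - ∑ t : Fin ℓ, b t := by
    rw [← Fin.sum_univ_eq_sum_range (fun i => padG ℓ b (2 * ℓ + i)) ℓ,
      Finset.sum_congr rfl fun t _ => hG3 t, Finset.sum_sub_distrib]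
    simp
  have hsumF : (∑ t : Fin (3 * ℓ), padF ℓ a t.val) = (ℓ : ℝ) := by
    rw [Fin.sum_univ_eq_sum_range (fun i => padF ℓ a i) (3 * ℓ), sum3, B1F, B2F, B3F]
    ring
  have hsumG : (∑ t : Fin (3 * ℓ), padG ℓ b t.val) = (ℓ : ℝ) := by
    rw [Fin.sum_univ_eq_sum_range (fun i => padG ℓ b i) (3 * ℓ), sum3, B1G, B2G, B3G]
    ring
  have hinner : (∑ t : Fin (3 * ℓ), padF ℓ a t.val * padG ℓ b t.val)
      = ∑ t : Fin ℓ, a t * b t := by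
    rw [Fin.sum_univ_eq_sum_range (fun i => padF ℓ a i * padG ℓ b i) (3 * ℓ), sum3]
    have e1 : ∑ i ∈ Finset.range ℓ, padF ℓ a i * padG ℓ b i = ∑ t : Fin ℓ, a t * b t := by
      rw [← Fin.sum_univ_eq_sum_range (fun i => padF ℓ a i * padG ℓ b i) ℓ]
      exact Finset.sum_congr rfl fun t _ => by rw [hF1 t, hG1 t]
    have e2 : ∑ i ∈ Finset.range ℓ, padF ℓ a (ℓ + i) * padG ℓ b (ℓ + i) = 0 := by
      rw [← Fin.sum_univ_eq_sum_range (fun i => padF ℓ a (ℓ + i) * padG ℓ b (ℓ + i)) ℓ]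
      exact Finset.sum_eq_zero fun t _ => by rw [hG2 t, mul_zero]
    have e3 : ∑ i ∈ Finset.range ℓ, padF ℓ a (2 * ℓ + i) * padG ℓ b (2 * ℓ + i) = 0 :=
      Finset.sum_eq_zero fun i _ => by rw [hF3 i, zero_mul]
    rw [e1, e2, e3, add_zero, add_zero]
  refine ⟨hFbin, hGbin, hsumF, hsumG, hinner, ?_⟩
  have hnF : euclNorm (fun t : Fin (3 * ℓ) => padF ℓ a t.val) = Real.sqrt ℓ := by
    unfold euclNorm
    congr 1
    have : ∀ t : Fin (3 * ℓ), (padF ℓ a t.val) ^ 2 = padF ℓ a t.val := by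
      intro t; rcases hFbin t with h | h <;> simp [h]
    rw [Finset.sum_congr rfl fun t _ => this t, hsumF]
  have hnG : euclNorm (fun t : Fin (3 * ℓ) => padG ℓ b t.val) = Real.sqrt ℓ := by
    unfold euclNorm
    congr 1
    have : ∀ t : Fin (3 * ℓ), (padG ℓ b t.val) ^ 2 = padG ℓ b t.val := by
      intro t; rcases hGbin t with h | h <;> simp [h]
    rw [Finset.sum_congr rfl fun t _ => this t, hsumG]
  rw [hinner, hnF, hnG, Real.mul_self_sqrt (by positivity)]
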